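/- Let t = ⌈αn⌉ for a constant 0 < α ≤ 1, and let p = c n^{1-s} for a constant c. The expected number of t-subsets of H_{n,s,p} containing no edge is at most ((e/α) · exp(-(c α^{s-1}/s!)(1-o(1))))^t; in particular, for c large enough (depending on α and s) this tends to 0 as n → ∞. -/

import Mathlib

open MeasureTheory Filter Asymptotics

/-- The Bernoulli measure on `Bool` with parameter `p` (a probability measure
whenever `0 ≤ p ≤ 1`). -/
noncomputable def bern (p : ℝ) : Measure Bool :=
  ENNReal.ofReal p • Measure.dirac true + ENNReal.ofReal (1 - p) • Measure.dirac false

instance (p : ℝ) : IsFiniteMeasure (bern p) := by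
  constructor
  simp only [bern, Measure.add_apply, Measure.smul_apply, smul_eq_mul,
    measure_univ, mul_one]
  exact ENNReal.add_lt_top.mpr ⟨ENNReal.ofReal_lt_top, ENNReal.ofReal_lt_top⟩

/-- The index set of potential edges of an `s`-uniform hypergraph on `n`
vertices: the `s`-element subsets of `Fin n`. -/
abbrev EdgeIdx (n s : ℕ) := {e : Finset (Fin n) // e.card = s}

/-- A sample point of the random hypergraph `H_{n,s,p}`: for each potential edge,
whether it is present. -/
abbrev HypOmega (n s : ℕ) := EdgeIdx n s → Bool

/-- The law of `H_{n,s,p}`: each of the `C(n,s)` potential edges is present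
independently with probability `p`. -/
noncomputable def hypMeasure (n s : ℕ) (p : ℝ) : Measure (HypOmega n s) :=
  Measure.pi fun _ => bern p

open scoped Classical in
/-- The number of `t`-subsets of the vertices of the hypergraph `ω` containing no
edge. -/
noncomputable def edgeFreeCount (n s t : ℕ) (ω : HypOmega n s) : ℕ :=
  ((Finset.univ : Finset (Finset (Fin n))).filter
    fun T => T.card = t ∧ ∀ e : EdgeIdx n s, e.1 ⊆ T → ω e = false).card

instance (n s : ℕ) (p : ℝ) : IsFiniteMeasure (hypMeasure n s p) := by
  unfold hypMeasure; infer_instance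

open scoped Classical in
lemma expectation_eq (n s t : ℕ) (p : ℝ) (hp0 : 0 ≤ p) (hp1 : p ≤ 1) :
    ∫ ω, (edgeFreeCount n s t ω : ℝ) ∂hypMeasure n s p
      = (n.choose t) * (1 - p) ^ (t.choose s) := by
  set 𝒯 := Finset.univ.filter (fun T : Finset (Fin n) => T.card = t) with h𝒯
  have hTcard : 𝒯.card = n.choose t := by
    rw [h𝒯, ← Finset.powerset_univ, ← Finset.powersetCard_eq_filter,
      Finset.card_powersetCard, Finset.card_univ, Fintype.card_fin]
  have key : ∀ T ∈ 𝒯, (hypMeasure n s p)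
      {ω' : HypOmega n s | ∀ e : EdgeIdx n s, e.1 ⊆ T → ω' e = false}
      = ENNReal.ofReal (1 - p) ^ (t.choose s) := by
    intro T hT
    have hT' : T.card = t := by simpa [h𝒯] using hT
    have hset : {ω' : HypOmega n s | ∀ e : EdgeIdx n s, e.1 ⊆ T → ω' e = false}
        = Set.univ.pi (fun e : EdgeIdx n s =>
            if e.1 ⊆ T then ({false} : Set Bool) else Set.univ) := by
      ext ω'
      simp only [Set.mem_setOf_eq, Set.mem_pi, Set.mem_univ, forall_true_left]
      constructor
      · intro h e
        by_cases he : e.1 ⊆ T <;> simp [he, h e]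
      · intro h e he
        have := h e
        simpa [he] using this
    have hfalse : bern p {false} = ENNReal.ofReal (1 - p) := by
      simp [bern, Measure.dirac_apply]
    have huniv : bern p Set.univ = 1 := by
      simp only [bern, Measure.add_apply, Measure.smul_apply, smul_eq_mul,
        measure_univ, mul_one]
      rw [← ENNReal.ofReal_add hp0 (by linarith), ← ENNReal.ofReal_one]
      norm_num
    have hcard : (Finset.univ.filter fun e : EdgeIdx n s => e.1 ⊆ T).card
        = t.choose s := by
      rw [← hT', ← Finset.card_powersetCard]
      apply Finset.card_bij (fun e _ => e.1)
      · intro e he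
        simp only [Finset.mem_powersetCard]
        exact ⟨by simpa using he, e.2⟩
      · intro a ha b hb h; exact Subtype.ext h
      · intro A hA
        simp only [Finset.mem_powersetCard] at hA
        exact ⟨⟨A, hA.2⟩, by simpa using hA.1, rfl⟩
    rw [hset, hypMeasure, Measure.pi_pi]
    simp only [apply_ite (bern p), hfalse, huniv]
    rw [Finset.prod_ite, Finset.prod_const, Finset.prod_const, one_pow, mul_one, hcard]
  have hfun : (fun ω : HypOmega n s => (edgeFreeCount n s t ω : ℝ)) =
      fun ω => ∑ T ∈ 𝒯, Set.indicator
        {ω' : HypOmega n s | ∀ e : EdgeIdx n s, e.1 ⊆ T → ω' e = false}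
        (fun _ => (1:ℝ)) ω := by
    funext ω
    calc (edgeFreeCount n s t ω : ℝ)
        = ∑ T : Finset (Fin n), (if T.card = t ∧
            (∀ e : EdgeIdx n s, e.1 ⊆ T → ω e = false) then (1:ℝ) else 0) := by
          rw [edgeFreeCount, Finset.card_filter]
          push_cast
          simp
      _ = ∑ T ∈ 𝒯, (if (∀ e : EdgeIdx n s, e.1 ⊆ T → ω e = false)
            then (1:ℝ) else 0) := by
          rw [h𝒯, Finset.sum_filter]
          exact Finset.sum_congr rfl fun T _ => by rw [ite_and]
      _ = _ := by
          refine Finset.sum_congr rfl fun T _ => ?_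
          simp [Set.indicator_apply, Set.mem_setOf_eq]
  rw [hfun, integral_finset_sum _ (fun T _ => Integrable.of_finite)]
  have : ∀ T ∈ 𝒯, ∫ ω, Set.indicator
      {ω' : HypOmega n s | ∀ e : EdgeIdx n s, e.1 ⊆ T → ω' e = false}
      (fun _ => (1:ℝ)) ω ∂hypMeasure n s p = (1 - p) ^ (t.choose s) := by
    intro T hT
    rw [MeasureTheory.integral_indicator_const (1:ℝ) MeasurableSet.of_discrete,
      measureReal_def, key T hT]
    rw [smul_eq_mul, mul_one, ENNReal.toReal_pow, ENNReal.toReal_ofReal (by linarith)]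
  rw [Finset.sum_congr rfl this, Finset.sum_const, hTcard, nsmul_eq_mul]

lemma pow_le_exp_mul_factorial : ∀ t : ℕ, (t:ℝ)^t ≤ Real.exp 1 ^ t * t.factorial := by
  intro t
  induction t with
  | zero => simp
  | succ t ih =>
    have h1 : ((t:ℝ)+1)^t ≤ Real.exp 1 * (t:ℝ)^t := by
      rcases Nat.eq_zero_or_pos t with h|h
      · subst h; simpa using Real.one_le_exp zero_le_one
      · have ht : (0:ℝ) < t := by exact_mod_cast h
        have h2 : (t:ℝ)+1 ≤ t * Real.exp (1/t) := by
          have h3 := Real.add_one_le_exp (1/(t:ℝ))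
          have : (t:ℝ) * (1/t + 1) ≤ t * Real.exp (1/t) := by nlinarith
          calc (t:ℝ)+1 = t * (1/t + 1) := by field_simp; ring
            _ ≤ _ := this
        calc ((t:ℝ)+1)^t ≤ ((t:ℝ) * Real.exp (1/t))^t :=
              pow_le_pow_left₀ (by positivity) h2 t
          _ = (t:ℝ)^t * Real.exp (1/t) ^ t := mul_pow _ _ _
          _ = (t:ℝ)^t * Real.exp 1 := by
              rw [← Real.exp_nat_mul]
              congr 1
              field_simp
          _ = Real.exp 1 * (t:ℝ)^t := mul_comm _ _
    calc ((t+1:ℕ):ℝ)^(t+1) = ((t:ℝ)+1) * ((t:ℝ)+1)^t := by push_cast; ring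
      _ ≤ ((t:ℝ)+1) * (Real.exp 1 * (t:ℝ)^t) := by
          apply mul_le_mul_of_nonneg_left h1 (by positivity)
      _ ≤ ((t:ℝ)+1) * (Real.exp 1 * (Real.exp 1 ^ t * t.factorial)) := by
          have he : (0:ℝ) < Real.exp 1 := Real.exp_pos 1
          gcongr
      _ = Real.exp 1 ^ (t+1) * ((t+1).factorial) := by
          push_cast [Nat.factorial_succ]; ring

lemma choose_le_exp_pow (n t : ℕ) (ht : 0 < t) :
    (n.choose t : ℝ) ≤ (Real.exp 1 * n / t)^t := by
  have h1 : (n.choose t : ℝ) * t.factorial ≤ (n:ℝ)^t := by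
    have := Nat.descFactorial_le_pow n t
    rw [Nat.descFactorial_eq_factorial_mul_choose] at this
    exact_mod_cast by rw [mul_comm]; exact_mod_cast this
  have h2 := pow_le_exp_mul_factorial t
  have htpos : (0:ℝ) < (t:ℝ)^t := by positivity
  rw [div_pow, le_div_iff₀ htpos]
  calc (n.choose t:ℝ) * (t:ℝ)^t
      ≤ (n.choose t:ℝ) * (Real.exp 1 ^ t * t.factorial) := by
        exact mul_le_mul_of_nonneg_left h2 (by positivity)
    _ = Real.exp 1 ^ t * ((n.choose t:ℝ) * t.factorial) := by ring
    _ ≤ Real.exp 1 ^ t * (n:ℝ)^t := by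
        exact mul_le_mul_of_nonneg_left h1 (by positivity)
    _ = (Real.exp 1 * n)^t := (mul_pow _ _ _).symm

lemma descFactorial_split (T k : ℕ) (hT : T ≠ 0) (hk : k ≠ 0) :
    T.descFactorial k = T * (T-1).descFactorial (k-1) := by
  cases T with
  | zero => omega
  | succ T' =>
    cases k with
    | zero => omega
    | succ k' => simpa using Nat.succ_descFactorial_succ T' k'

theorem stmt16 (s : ℕ) (hs : 2 ≤ s) (α : ℝ) (hα0 : 0 < α) (hα1 : α ≤ 1) :
    (∀ c : ℝ, 0 ≤ c → ∃ ε : ℕ → ℝ, Filter.Tendsto ε Filter.atTop (nhds 0) ∧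
      ∀ᶠ n in Filter.atTop,
        (∫ ω, (edgeFreeCount n s ⌈α * n⌉₊ ω : ℝ)
            ∂ hypMeasure n s (c * (n : ℝ) ^ ((1 : ℝ) - (s : ℝ)))) ≤
          ((Real.exp 1 / α) *
            Real.exp (-(c * α ^ (s - 1) / (Nat.factorial s)) * (1 - ε n))) ^
            ⌈α * n⌉₊) ∧
    (∃ c₀ : ℝ, ∀ c : ℝ, c₀ ≤ c →
      Filter.Tendsto
        (fun n : ℕ => ∫ ω, (edgeFreeCount n s ⌈α * n⌉₊ ω : ℝ)
          ∂ hypMeasure n s (c * (n : ℝ) ^ ((1 : ℝ) - (s : ℝ))))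
        Filter.atTop (nhds 0)) := by
  have hs1 : 1 ≤ s := le_trans one_le_two hs
  have hαpow : (0:ℝ) < α^(s-1) := pow_pos hα0 _
  have hfact : (0:ℝ) < (s.factorial : ℝ) := by exact_mod_cast s.factorial_pos
  set ε : ℕ → ℝ := fun n =>
    1 - (n:ℝ)^((1:ℝ)-(s:ℝ)) * ((⌈α * n⌉₊ : ℕ).descFactorial s) /
      ((⌈α * n⌉₊ : ℕ) * α^(s-1)) with hε
  have htlb : ∀ n : ℕ, α * n ≤ (⌈α * (n:ℝ)⌉₊ : ℝ) := fun n => Nat.le_ceil _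
  have htub : ∀ n : ℕ, ((⌈α * (n:ℝ)⌉₊ : ℕ) : ℝ) < α * n + 1 := fun n =>
    Nat.ceil_lt_add_one (by positivity)
  have htt : Tendsto (fun n : ℕ => α * n) atTop atTop :=
    Tendsto.const_mul_atTop hα0 tendsto_natCast_atTop_atTop
  have httN : Tendsto (fun n : ℕ => ⌈α * (n:ℝ)⌉₊) atTop atTop := by
    rw [← tendsto_natCast_atTop_iff (R := ℝ)]
    exact tendsto_atTop_mono htlb htt
  have hrp : Tendsto (fun n : ℕ => (n:ℝ)^((1:ℝ)-(s:ℝ))) atTop (nhds 0) := by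
    have h2 : (0:ℝ) < (s:ℝ) - 1 := by
      have : (2:ℝ) ≤ s := by exact_mod_cast hs
      linarith
    have h3 : (1:ℝ)-(s:ℝ) = -((s:ℝ)-1) := by ring
    rw [h3]
    exact (tendsto_rpow_neg_atTop h2).comp (tendsto_natCast_atTop_atTop (R := ℝ))
  -- limit of t/(nα)
  have hg : Tendsto (fun n : ℕ => ((⌈α * (n:ℝ)⌉₊ : ℕ) : ℝ) / ((n:ℝ) * α))
      atTop (nhds 1) := by
    apply tendsto_of_tendsto_of_tendsto_of_le_of_le'
      (tendsto_const_nhds (x := (1:ℝ)))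
      (h := fun n : ℕ => 1 + (n:ℝ)⁻¹ * α⁻¹)
    · simpa using (tendsto_const_nhds (x := (1:ℝ))).add
        ((tendsto_inv_atTop_nhds_zero_nat (𝕜 := ℝ)).mul_const α⁻¹)
    · filter_upwards [eventually_ge_atTop 1] with n hn
      have hn0 : (0:ℝ) < (n:ℝ) := by exact_mod_cast hn
      rw [le_div_iff₀ (by positivity)]
      linarith [htlb n]
    · filter_upwards [eventually_ge_atTop 1] with n hn
      have hn0 : (0:ℝ) < (n:ℝ) := by exact_mod_cast hn
      rw [div_le_iff₀ (by positivity)]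
      have := htub n
      have hexp : (1 + (n:ℝ)⁻¹ * α⁻¹) * ((n:ℝ) * α) = (n:ℝ) * α + 1 := by
        field_simp
      rw [hexp]
      linarith
  -- each factor
  have hfac : ∀ i : ℕ, Tendsto
      (fun n : ℕ => (((⌈α * (n:ℝ)⌉₊ : ℕ) : ℝ) - (1+i)) / ((n:ℝ) * α))
      atTop (nhds 1) := by
    intro i
    have h2 : Tendsto (fun n : ℕ => ((1:ℝ)+i) / ((n:ℝ) * α)) atTop (nhds 0) := by
      have := (tendsto_inv_atTop_nhds_zero_nat (𝕜 := ℝ)).mul_const (((1:ℝ)+i) * α⁻¹)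
      rw [zero_mul] at this
      apply this.congr
      intro n
      rw [div_eq_mul_inv, mul_inv]
      ring
    have := hg.sub h2
    rw [sub_zero] at this
    apply this.congr
    intro n
    rw [← sub_div]
  -- ε → 0
  have hεt : Tendsto ε atTop (nhds 0) := by
    have hprod : Tendsto (fun n : ℕ => ∏ i ∈ Finset.range (s-1),
        ((((⌈α * (n:ℝ)⌉₊ : ℕ)) : ℝ) - (1+i)) / ((n:ℝ) * α)) atTop (nhds 1) := by
      have := tendsto_finset_prod (Finset.range (s-1))
        (f := fun (i : ℕ) (n : ℕ) =>
          ((((⌈α * (n:ℝ)⌉₊ : ℕ)) : ℝ) - (1+(i:ℝ))) / ((n:ℝ) * α))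
        (a := fun _ => (1:ℝ)) (fun i _ => hfac i)
      simpa using this
    have heq : ∀ᶠ n : ℕ in atTop, (∏ i ∈ Finset.range (s-1),
        ((((⌈α * (n:ℝ)⌉₊ : ℕ)) : ℝ) - (1+i)) / ((n:ℝ) * α)) = 1 - ε n := by
      filter_upwards [eventually_ge_atTop 1, httN.eventually_ge_atTop s]
        with n hn1 hns
      set T := ⌈α * (n:ℝ)⌉₊ with hT
      have hT1 : 1 ≤ T := le_trans hs1 hns
      have hn0 : (0:ℝ) < (n:ℝ) := by exact_mod_cast hn1
      have hT0 : ((T:ℕ):ℝ) ≠ 0 := by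
        simp only [ne_eq, Nat.cast_eq_zero]; omega
      have hD : ((T.descFactorial s : ℕ) : ℝ)
          = (T:ℝ) * ∏ i ∈ Finset.range (s-1), ((T:ℝ) - (1+i)) := by
        rw [descFactorial_split T s (by omega) (by omega),
          Nat.descFactorial_eq_prod_range]
        push_cast
        congr 1
        refine Finset.prod_congr rfl fun i hi => ?_
        have hi' : i < s - 1 := Finset.mem_range.mp hi
        have h1iT : 1 + i ≤ T := by omega
        have : T - 1 - i = T - (1+i) := by omega
        rw [this, Nat.cast_sub h1iT]
        push_cast
        ring
      have hrpow : (n:ℝ)^((1:ℝ)-(s:ℝ)) = ((n:ℝ)^((s-1 : ℕ)))⁻¹ := by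
        rw [← Real.rpow_natCast (n:ℝ) (s-1), ← Real.rpow_neg (le_of_lt hn0)]
        congr 1
        push_cast [Nat.cast_sub hs1]
        ring
      have hεn : ε n = 1 - (n:ℝ)^((1:ℝ)-(s:ℝ)) * ((T : ℕ).descFactorial s) /
          ((T : ℕ) * α^(s-1)) := rfl
      rw [hεn, hrpow, hD]
      rw [Finset.prod_div_distrib, Finset.prod_const, Finset.card_range, mul_pow]
      have hnp : ((n:ℝ)^((s-1:ℕ))) ≠ 0 := by positivity
      field_simp
      ring
    have h1 : Tendsto (fun n => 1 - ε n) atTop (nhds 1) := hprod.congr' heq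
    have := (tendsto_const_nhds (x := (1:ℝ))).sub h1
    simpa using this
  have hple : ∀ c : ℝ, Tendsto (fun n : ℕ => c * (n:ℝ)^((1:ℝ)-(s:ℝ))) atTop (nhds 0) := by
    intro c
    simpa using hrp.const_mul c
  have part1 : ∀ c : ℝ, 0 ≤ c → ∀ᶠ n : ℕ in atTop,
      (∫ ω, (edgeFreeCount n s ⌈α * n⌉₊ ω : ℝ)
          ∂ hypMeasure n s (c * (n : ℝ) ^ ((1 : ℝ) - (s : ℝ)))) ≤
        ((Real.exp 1 / α) *
          Real.exp (-(c * α ^ (s - 1) / (Nat.factorial s)) * (1 - ε n))) ^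
          ⌈α * n⌉₊ := by
    intro c hc
    have hev1 : ∀ᶠ n : ℕ in atTop, c * (n:ℝ)^((1:ℝ)-(s:ℝ)) ≤ 1 :=
      (hple c).eventually (eventually_le_nhds one_pos)
    filter_upwards [eventually_ge_atTop 1, httN.eventually_ge_atTop s, hev1]
      with n hn1 hns hp1
    set T := ⌈α * (n:ℝ)⌉₊ with hTdef
    set p := c * (n:ℝ)^((1:ℝ)-(s:ℝ)) with hpdef
    have hn0 : (0:ℝ) < n := by exact_mod_cast hn1
    have hp0 : 0 ≤ p := mul_nonneg hc (Real.rpow_nonneg (Nat.cast_nonneg n) _)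
    have hT1 : 0 < T := by omega
    have hT0 : ((T:ℕ):ℝ) ≠ 0 := Nat.cast_ne_zero.mpr (by omega)
    rw [expectation_eq n s T p hp0 hp1]
    set k := T.choose s with hk
    set K := c * α ^ (s - 1) / ((Nat.factorial s : ℕ) : ℝ) with hK
    have hkey : p * k = T * (K * (1 - ε n)) := by
      have hD : ((T.descFactorial s : ℕ) : ℝ)
          = ((s.factorial : ℕ) : ℝ) * (k : ℝ) := by
        exact_mod_cast congrArg (Nat.cast (R := ℝ))
          (Nat.descFactorial_eq_factorial_mul_choose T s)
      have h1ε : 1 - ε n = (n:ℝ)^((1:ℝ)-(s:ℝ)) * ((T : ℕ).descFactorial s) /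
          ((T : ℕ) * α^(s-1)) := by
        simp only [hε]; ring
      rw [h1ε, hD, hK, hpdef]
      field_simp
    have h1 : ((n.choose T : ℕ) : ℝ) ≤ (Real.exp 1 / α)^T := by
      calc ((n.choose T : ℕ):ℝ) ≤ (Real.exp 1 * n / T)^T := choose_le_exp_pow n T hT1
        _ ≤ (Real.exp 1 / α)^T := by
            apply pow_le_pow_left₀ (by positivity)
            rw [div_le_div_iff₀ (by positivity) hα0]
            have h5 := htlb n
            nlinarith [Real.exp_pos 1]
    have h2 : (1-p)^k ≤ Real.exp (-p) ^ k := by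
      apply pow_le_pow_left₀ (by linarith)
      linarith [Real.add_one_le_exp (-p)]
    calc ((n.choose T : ℕ):ℝ) * (1-p)^k
        ≤ (Real.exp 1 / α)^T * Real.exp (-p) ^ k :=
          mul_le_mul h1 h2 (pow_nonneg (by linarith) k) (by positivity)
      _ = (Real.exp 1 / α)^T * Real.exp (-(p * k)) := by
          rw [← Real.exp_nat_mul]; congr 1; ring
      _ = (Real.exp 1 / α)^T * Real.exp (-K * (1 - ε n)) ^ T := by
          rw [← Real.exp_nat_mul]
          congr 1
          rw [hkey]; ring
      _ = ((Real.exp 1 / α) * Real.exp (-K * (1 - ε n))) ^ T := (mul_pow _ _ _).symm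
  refine ⟨fun c hc => ⟨ε, hεt, part1 c hc⟩, ?_⟩
  refine ⟨(2*(1 - Real.log α) + 1) * s.factorial / α^(s-1), fun c hc => ?_⟩
  have hlog : Real.log α ≤ 0 := Real.log_nonpos (le_of_lt hα0) hα1
  have hc₀pos : 0 < (2*(1 - Real.log α) + 1) * s.factorial / α^(s-1) :=
    div_pos (mul_pos (by linarith) hfact) hαpow
  have hc0 : 0 ≤ c := le_trans (le_of_lt hc₀pos) hc
  set K := c * α ^ (s - 1) / ((Nat.factorial s : ℕ) : ℝ) with hK
  have hKlb : 2*(1 - Real.log α) + 1 ≤ K := by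
    rw [hK, le_div_iff₀ hfact]
    calc (2*(1-Real.log α)+1) * (s.factorial : ℝ)
        = ((2*(1-Real.log α)+1) * s.factorial / α^(s-1)) * α^(s-1) := by
          field_simp
      _ ≤ c * α^(s-1) := mul_le_mul_of_nonneg_right hc (le_of_lt hαpow)
  have hKpos : 0 < K := by linarith
  set r := Real.exp 1 / α * Real.exp (-(K/2)) with hr
  have hr0 : 0 ≤ r := by positivity
  have hr1 : r < 1 := by
    have h3 : Real.exp 1 / α * Real.exp (-(K/2)) = Real.exp (1 - K/2) / α := by
      rw [div_mul_eq_mul_div, ← Real.exp_add]; ring_nf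
    rw [hr, h3, div_lt_one hα0]
    calc Real.exp (1 - K/2) < Real.exp (Real.log α) := by
          apply Real.exp_lt_exp.mpr; linarith
      _ = α := Real.exp_log hα0
  have hhalf : ∀ᶠ n : ℕ in atTop, ε n ≤ 1/2 :=
    hεt.eventually (eventually_le_nhds (by norm_num))
  apply squeeze_zero' (g := fun n : ℕ => r ^ ⌈α * (n:ℝ)⌉₊)
  · exact Filter.Eventually.of_forall fun n =>
      integral_nonneg fun ω => Nat.cast_nonneg _
  · filter_upwards [part1 c hc0, hhalf] with n hb hhf
    refine le_trans hb ?_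
    apply pow_le_pow_left₀ (by positivity)
    rw [hr]
    refine mul_le_mul_of_nonneg_left ?_ (by positivity)
    apply Real.exp_le_exp.mpr
    nlinarith
  · exact (tendsto_pow_atTop_nhds_zero_of_lt_one hr0 hr1).comp httN
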